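/- For every ν ∈ ℝ and z, w > 0, K_ν(z) K_ν(w) = (1/2) ∫_0^∞ (1/v) exp(-1/(2v)) exp(-(z² + w²) v / 2) K_ν(zwv) dv, where K_ν(a) := (1/2) ∫_ℝ exp(-a cosh x - ν x) dx for a > 0. -/

import Mathlib

open MeasureTheory Real Set

-- quadratic lower bound for exp on nonneg
lemma aux_sq_le_exp {t : ℝ} (ht : 0 ≤ t) : t ^ 2 / 4 ≤ Real.exp t := by
  have h := Real.add_one_le_exp (t / 2)
  have h2 : Real.exp (t / 2) ^ 2 = Real.exp t := by
    rw [sq, ← Real.exp_add]; congr 1; ring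
  nlinarith [Real.exp_pos (t / 2)]

lemma aux_cosh_ge_half_exp (x : ℝ) : Real.exp |x| / 2 ≤ Real.cosh x := by
  rw [← Real.cosh_abs, Real.cosh_eq]
  have := (Real.exp_pos (-|x|)).le
  linarith

lemma aux_sq_le_cosh (x : ℝ) : x ^ 2 / 8 ≤ Real.cosh x := by
  have h1 := aux_cosh_ge_half_exp x
  have h2 := aux_sq_le_exp (abs_nonneg x)
  have : |x| ^ 2 = x ^ 2 := sq_abs x
  nlinarith

lemma aux_quart_le_cosh (x : ℝ) : x ^ 4 / 512 ≤ Real.cosh x := by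
  have h1 := aux_cosh_ge_half_exp x
  have h2 := aux_sq_le_exp (t := |x| / 2) (by positivity)
  have h3 : Real.exp (|x| / 2) ^ 2 = Real.exp |x| := by
    rw [sq, ← Real.exp_add]; congr 1; ring
  have h4 : |x| ^ 2 = x ^ 2 := sq_abs x
  nlinarith [Real.exp_pos (|x| / 2), sq_nonneg (x^2/16 - Real.exp (|x|/2))]

-- Gaussian with linear term
lemma aux_gauss_lin (b c : ℝ) (hb : 0 < b) :
    Integrable fun x : ℝ => Real.exp (-b * x ^ 2 + c * x) := by
  have h0 : Integrable fun x : ℝ => Real.exp (-b * x ^ 2) := integrable_exp_neg_mul_sq hb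
  have h1 : Integrable fun x : ℝ => Real.exp (-b * (x - c / (2 * b)) ^ 2) :=
    (measurePreserving_sub_right volume (c / (2 * b))).integrable_comp
      h0.aestronglyMeasurable |>.2 h0
  have h2 : (fun x : ℝ => Real.exp (-b * x ^ 2 + c * x))
      = fun x => Real.exp (c ^ 2 / (4 * b)) * Real.exp (-b * (x - c / (2 * b)) ^ 2) := by
    funext x
    rw [← Real.exp_add]
    congr 1
    field_simp
    ring
  rw [h2]
  exact h1.const_mul _

lemma aux_integrable_exp_cosh (a ν : ℝ) (ha : 0 < a) :
    Integrable fun x : ℝ => Real.exp (-a * Real.cosh x - ν * x) := by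
  have hc : Continuous fun x : ℝ => Real.exp (-a * Real.cosh x - ν * x) := by
    continuity
  refine (aux_gauss_lin (a / 8) (-ν) (by positivity)).mono hc.aestronglyMeasurable ?_
  refine ae_of_all _ fun x => ?_
  rw [Real.norm_eq_abs, Real.norm_eq_abs, abs_of_pos (Real.exp_pos _),
    abs_of_pos (Real.exp_pos _)]
  apply Real.exp_le_exp.2
  have := aux_sq_le_cosh x
  nlinarith
lemma aux_key_cosh {z w : ℝ} (hz : 0 < z) (hw : 0 < w) (x u : ℝ) :
    z * Real.cosh u + w * Real.cosh (x - u)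
      = Real.sqrt (z ^ 2 + w ^ 2 + 2 * z * w * Real.cosh x) *
        Real.cosh (u - Real.arsinh (w * Real.sinh x /
          Real.sqrt (z ^ 2 + w ^ 2 + 2 * z * w * Real.cosh x))) := by
  have hco := Real.one_le_cosh x
  have hzw' : (0:ℝ) ≤ z * w * (Real.cosh x - 1) :=
    mul_nonneg (mul_pos hz hw).le (by linarith)
  set A := Real.sqrt (z ^ 2 + w ^ 2 + 2 * z * w * Real.cosh x) with hAdef
  have hargpos : (0:ℝ) < z ^ 2 + w ^ 2 + 2 * z * w * Real.cosh x := by nlinarith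
  have hA0 : 0 < A := Real.sqrt_pos.2 hargpos
  have hA2 : A ^ 2 = z ^ 2 + w ^ 2 + 2 * z * w * Real.cosh x := Real.sq_sqrt hargpos.le
  have hzw : (0:ℝ) < z + w * Real.cosh x := by nlinarith
  have hY : A ^ 2 * (1 + (w * Real.sinh x / A) ^ 2) = (z + w * Real.cosh x) ^ 2 := by
    have hc := Real.cosh_sq x
    field_simp
    nlinarith [hc]
  have hcA : A * Real.sqrt (1 + (w * Real.sinh x / A) ^ 2) = z + w * Real.cosh x := by
    nth_rewrite 1 [← Real.sqrt_sq hA0.le]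
    rw [← Real.sqrt_mul (sq_nonneg A), hY, Real.sqrt_sq hzw.le]
  have h1 : A * (w * Real.sinh x / A) = w * Real.sinh x := by field_simp
  rw [Real.cosh_sub, Real.cosh_sub, Real.cosh_arsinh, Real.sinh_arsinh]
  linear_combination (- Real.cosh u) * hcA + Real.sinh u * h1

lemma aux_vint (A : ℝ) (hA : 0 < A) :
    IntegrableOn (fun v : ℝ => (1 / v) * Real.exp (-1 / (2 * v) - A ^ 2 / 2 * v)) (Ioi 0) ∧
    (∫ v in Ioi (0:ℝ), (1 / v) * Real.exp (-1 / (2 * v) - A ^ 2 / 2 * v))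
      = ∫ t : ℝ, Real.exp (-A * Real.cosh t) := by
  set g : ℝ → ℝ := fun v => (1 / v) * Real.exp (-1 / (2 * v) - A ^ 2 / 2 * v) with hg
  set f : ℝ → ℝ := fun t => Real.exp t / A with hf
  have hderiv : ∀ t ∈ (univ : Set ℝ), HasDerivWithinAt f (Real.exp t / A) univ t :=
    fun t _ => ((Real.hasDerivAt_exp t).div_const A).hasDerivWithinAt
  have hinj : InjOn f univ := by
    intro a _ b _ hab
    exact Real.exp_injective ((div_left_inj' hA.ne').1 hab)
  have himg : f '' univ = Ioi 0 := by
    ext v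
    simp only [image_univ, mem_range, mem_Ioi]
    constructor
    · rintro ⟨t, rfl⟩; positivity
    · intro hv
      refine ⟨Real.log (A * v), ?_⟩
      show Real.exp (Real.log (A * v)) / A = v
      rw [Real.exp_log (by positivity)]
      rw [mul_comm, mul_div_assoc, div_self hA.ne', mul_one]
  have hptwise : ∀ t : ℝ, |Real.exp t / A| • g (f t) = Real.exp (-A * Real.cosh t) := by
    intro t
    have he := Real.exp_pos t
    rw [smul_eq_mul, abs_of_pos (by positivity : (0:ℝ) < Real.exp t / A)]
    show (Real.exp t / A) * ((1 / (Real.exp t / A)) *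
      Real.exp (-1 / (2 * (Real.exp t / A)) - A ^ 2 / 2 * (Real.exp t / A)))
        = Real.exp (-A * Real.cosh t)
    have h1 : (Real.exp t / A) * (1 / (Real.exp t / A)) = 1 := by field_simp
    have h2 : -1 / (2 * (Real.exp t / A)) - A ^ 2 / 2 * (Real.exp t / A)
        = -A * Real.cosh t := by
      rw [Real.cosh_eq, Real.exp_neg]
      field_simp
      ring
    rw [← mul_assoc, h1, one_mul, h2]
  have hint : Integrable fun t : ℝ => Real.exp (-A * Real.cosh t) := by
    simpa using aux_integrable_exp_cosh A 0 hA
  constructor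
  · rw [← himg, integrableOn_image_iff_integrableOn_abs_deriv_smul MeasurableSet.univ hderiv hinj]
    rw [show (fun t => |Real.exp t / A| • g (f t)) = fun t => Real.exp (-A * Real.cosh t) from
      funext hptwise]
    exact hint.integrableOn
  · rw [← himg, integral_image_eq_integral_abs_deriv_smul MeasurableSet.univ hderiv hinj]
    rw [show (fun t => |Real.exp t / A| • g (f t)) = fun t => Real.exp (-A * Real.cosh t) from
      funext hptwise]
    simp [Measure.restrict_univ]
set_option maxHeartbeats 1000000 in
theorem stmt_6 (ν z w : ℝ) (hz : 0 < z) (hw : 0 < w) :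
    ((1 / 2) * ∫ x : ℝ, Real.exp (-z * Real.cosh x - ν * x)) *
        ((1 / 2) * ∫ x : ℝ, Real.exp (-w * Real.cosh x - ν * x))
      = (1 / 2) * ∫ v in Ioi (0:ℝ),
          (1 / v) * Real.exp (-1 / (2 * v)) * Real.exp (-(z ^ 2 + w ^ 2) * v / 2) *
            ((1 / 2) * ∫ x : ℝ, Real.exp (-(z * w * v) * Real.cosh x - ν * x)) := by
  have hzw := mul_pos hz hw
  set f : ℝ → ℝ := fun u => Real.exp (-z * Real.cosh u - ν * u) with hfdef
  set g : ℝ → ℝ := fun s => Real.exp (-w * Real.cosh s - ν * s) with hgdef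
  have hf : Integrable f := aux_integrable_exp_cosh z ν hz
  have hg : Integrable g := aux_integrable_exp_cosh w ν hw
  set A : ℝ → ℝ := fun x => Real.sqrt (z ^ 2 + w ^ 2 + 2 * z * w * Real.cosh x) with hAdef
  have hargpos : ∀ x : ℝ, (0:ℝ) < z ^ 2 + w ^ 2 + 2 * z * w * Real.cosh x := by
    intro x
    nlinarith [Real.one_le_cosh x, mul_nonneg hzw.le (sub_nonneg.2 (Real.one_le_cosh x))]
  have hApos : ∀ x, 0 < A x := fun x => Real.sqrt_pos.2 (hargpos x)
  have hA2 : ∀ x, (A x) ^ 2 = z ^ 2 + w ^ 2 + 2 * z * w * Real.cosh x :=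
    fun x => Real.sq_sqrt (hargpos x).le
  set G : ℝ → ℝ := fun x => ∫ t : ℝ, Real.exp (-A x * Real.cosh t) with hGdef
  set u0 : ℝ → ℝ := fun x => Real.arsinh (w * Real.sinh x / A x) with hu0def
  have hkey : ∀ x u, z * Real.cosh u + w * Real.cosh (x - u) = A x * Real.cosh (u - u0 x) :=
    fun x u => aux_key_cosh hz hw x u
  -- inner u-integral
  have hinner : ∀ x : ℝ, (∫ u : ℝ, f u * g (x - u)) = Real.exp (-ν * x) * G x := by
    intro x
    have h1 : ∀ u : ℝ, f u * g (x - u)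
        = Real.exp (-ν * x) * Real.exp (-A x * Real.cosh (u - u0 x)) := by
      intro u
      show Real.exp (-z * Real.cosh u - ν * u) * Real.exp (-w * Real.cosh (x - u) - ν * (x - u))
        = _
      rw [← Real.exp_add, ← Real.exp_add]
      congr 1
      linear_combination - hkey x u
    rw [show (fun u : ℝ => f u * g (x - u))
        = fun u : ℝ => Real.exp (-ν * x) * Real.exp (-A x * Real.cosh (u - u0 x)) from
      funext h1]
    rw [integral_const_mul]
    congr 1
    exact integral_sub_right_eq_self (fun t => Real.exp (-A x * Real.cosh t)) (u0 x)
  -- joint integrability for LHS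
  have hk : Integrable (Function.uncurry fun u x : ℝ => f u * g (x - u))
      (volume.prod volume) := by
    have h1 : Integrable (fun p : ℝ × ℝ => f p.1 * g p.2) (volume.prod volume) :=
      hf.mul_prod hg
    have heq : (Function.uncurry fun u x : ℝ => f u * g (x - u))
        = (fun p : ℝ × ℝ => f p.1 * g p.2) ∘ (fun p : ℝ × ℝ => (p.1, p.2 - p.1)) := rfl
    rw [heq]
    exact ((measurePreserving_prod_sub volume volume).integrable_comp
      h1.aestronglyMeasurable).2 h1
  -- LHS chain
  have hL : (∫ u, f u) * (∫ s, g s) = ∫ x : ℝ, Real.exp (-ν * x) * G x := by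
    rw [← integral_mul_const]
    have e1 : ∀ u : ℝ, f u * (∫ s, g s) = ∫ x : ℝ, f u * g (x - u) := by
      intro u
      rw [← integral_const_mul]
      exact (integral_sub_right_eq_self (fun s : ℝ => f u * g s) u).symm
    rw [show (fun u : ℝ => f u * ∫ s, g s) = fun u : ℝ => ∫ x : ℝ, f u * g (x - u) from
      funext e1]
    rw [integral_integral_swap hk]
    simp only [hinner]
  -- v-integral facts
  have hvint : ∀ x : ℝ, (∫ v in Ioi (0:ℝ), (1 / v) * Real.exp (-1 / (2 * v) - (A x) ^ 2 / 2 * v))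
      = G x := fun x => (aux_vint (A x) (hApos x)).2
  have hφint : ∀ x : ℝ, IntegrableOn
      (fun v : ℝ => (1 / v) * Real.exp (-1 / (2 * v) - (A x) ^ 2 / 2 * v)) (Ioi 0) :=
    fun x => (aux_vint (A x) (hApos x)).1
  set H : ℝ → ℝ → ℝ := fun v x =>
    Real.exp (-ν * x) * ((1 / v) * Real.exp (-1 / (2 * v) - (A x) ^ 2 / 2 * v)) with hHdef
  have hpt : ∀ v x : ℝ,
      (1 / v) * Real.exp (-1 / (2 * v)) * Real.exp (-(z ^ 2 + w ^ 2) * v / 2) *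
        Real.exp (-(z * w * v) * Real.cosh x - ν * x) = H v x := by
    intro v x
    show _ = Real.exp (-ν * x) * ((1 / v) * Real.exp (-1 / (2 * v) - (A x) ^ 2 / 2 * v))
    rw [mul_assoc (1 / v), ← Real.exp_add, mul_assoc (1 / v), ← Real.exp_add,
      mul_left_comm, ← Real.exp_add]
    congr 2
    linear_combination (v / 2) * hA2 x
  -- measurability of H
  have hmeas : AEStronglyMeasurable (Function.uncurry H)
      ((volume.restrict (Ioi 0)).prod volume) := by
    have hAc : Continuous A := by
      apply Real.continuous_sqrt.comp
      continuity
    have m1 : Measurable fun p : ℝ × ℝ => Real.exp (-ν * p.2) :=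
      (measurable_snd.const_mul (-ν)).exp
    have m2 : Measurable fun p : ℝ × ℝ => (1 : ℝ) / p.1 := measurable_const.div measurable_fst
    have m3 : Measurable fun p : ℝ × ℝ => -1 / (2 * p.1) :=
      measurable_const.div (measurable_fst.const_mul 2)
    have m4 : Measurable fun p : ℝ × ℝ => (A p.2) ^ 2 / 2 * p.1 :=
      ((((hAc.comp continuous_snd).pow 2).div_const 2).measurable).mul measurable_fst
    apply Measurable.aestronglyMeasurable
    exact m1.mul (m2.mul ((m3.sub m4).exp))
  -- integrability in v for each x
  have hHv : ∀ x : ℝ, Integrable (fun v => H v x) (volume.restrict (Ioi 0)) :=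
    fun x => (hφint x).const_mul (Real.exp (-ν * x))
  have hknorm : ∀ x : ℝ, (∫ u : ℝ, ‖f u * g (x - u)‖) = Real.exp (-ν * x) * G x := by
    intro x
    rw [show (fun u : ℝ => ‖f u * g (x - u)‖) = fun u : ℝ => f u * g (x - u) from
      funext fun u => norm_of_nonneg (mul_nonneg (le_of_lt (Real.exp_pos _))
        (le_of_lt (Real.exp_pos _)))]
    exact hinner x
  have hHnorm : ∀ x : ℝ, (∫ v in Ioi (0:ℝ), ‖H v x‖) = Real.exp (-ν * x) * G x := by
    intro x
    have hEq : ∀ v ∈ Ioi (0:ℝ), ‖H v x‖ = H v x := by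
      intro v hv
      have hv0 : (0:ℝ) < v := hv
      refine norm_of_nonneg ?_
      have h1v : (0:ℝ) ≤ 1 / v := by positivity
      exact mul_nonneg (Real.exp_pos _).le (mul_nonneg h1v (Real.exp_pos _).le)
    rw [setIntegral_congr_fun measurableSet_Ioi hEq]
    simp only [hHdef]
    rw [integral_const_mul, hvint x]
  have hH : Integrable (Function.uncurry H) ((volume.restrict (Ioi 0)).prod volume) := by
    refine (integrable_prod_iff' hmeas).2 ⟨ae_of_all _ fun x => hHv x, ?_⟩
    have c2 : Integrable (fun x : ℝ => ∫ u : ℝ, ‖f u * g (x - u)‖) volume :=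
      hk.integral_norm_prod_right
    refine c2.congr (ae_of_all _ fun x => ?_)
    show (∫ u : ℝ, ‖f u * g (x - u)‖) = ∫ v in Ioi (0:ℝ), ‖H v x‖
    rw [hknorm x]
    exact (hHnorm x).symm
  have hHinner : ∀ x : ℝ, (∫ v in Ioi (0:ℝ), H v x) = Real.exp (-ν * x) * G x := by
    intro x
    simp only [hHdef]
    rw [integral_const_mul, hvint x]
  have hR : (∫ v in Ioi (0:ℝ),
        (1 / v) * Real.exp (-1 / (2 * v)) * Real.exp (-(z ^ 2 + w ^ 2) * v / 2) *
          ((1 / 2) * ∫ x : ℝ, Real.exp (-(z * w * v) * Real.cosh x - ν * x)))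
      = (1 / 2) * ∫ x : ℝ, Real.exp (-ν * x) * G x := by
    have e1 : ∀ v ∈ Ioi (0:ℝ),
        (1 / v) * Real.exp (-1 / (2 * v)) * Real.exp (-(z ^ 2 + w ^ 2) * v / 2) *
          ((1 / 2) * ∫ x : ℝ, Real.exp (-(z * w * v) * Real.cosh x - ν * x))
        = (1 / 2) * ∫ x : ℝ, H v x := by
      intro v _
      rw [mul_left_comm]
      congr 1
      rw [← integral_const_mul]
      congr 1
      funext x
      exact hpt v x
    rw [setIntegral_congr_fun measurableSet_Ioi e1]
    rw [integral_const_mul]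
    congr 1
    rw [MeasureTheory.integral_integral_swap hH]
    simp only [hHinner]
  rw [hR]
  linear_combination (1 / 4 : ℝ) * hL
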